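/- arXiv:1808.01827 — 2 statements merged into one kernel-verified Lean document; each statement's English description precedes it below -/
import Mathlib

section
/- Let G be a connected finite simple graph and X an efficient dominating set with |X| ≥ 2. Then for every x ∈ X there exists x' ∈ X with x' ≠ x and d(x, x') = 3. -/
open SimpleGraph

def IsEffDomSet {V : Type*} (G : SimpleGraph V) (X : Set V) : Prop :=
  (∀ x ∈ X, ∀ y ∈ X, ¬ G.Adj x y) ∧
  (∀ v : V, ∃ x ∈ X, v ∈ insert x (G.neighborSet x)) ∧
  (∀ v : V, v ∉ X → ∃! x, x ∈ X ∧ G.Adj v x)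

lemma effdom_dist_ge_three {V : Type*} (G : SimpleGraph V) (hconn : G.Connected)
    (X : Finset V) (hX : IsEffDomSet G (X : Set V)) {a b : V} (ha : a ∈ X) (hb : b ∈ X)
    (hne : a ≠ b) : 3 ≤ G.dist a b := by
  have hind := hX.1
  have huniq := hX.2.2
  have hpos : 0 < G.dist a b := hconn.pos_dist_of_ne hne
  have h1 : G.dist a b ≠ 1 := by
    intro h
    exact hind a (by simpa using ha) b (by simpa using hb) (dist_eq_one_iff_adj.mp h)
  have h2 : G.dist a b ≠ 2 := by
    intro h
    obtain ⟨p, hp⟩ := (hconn a b).exists_walk_length_eq_dist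
    rw [h] at hp
    match p, hp with
    | SimpleGraph.Walk.cons (v := v) hav (SimpleGraph.Walk.cons hvb SimpleGraph.Walk.nil), _ =>
      have hvX : v ∉ (X : Set V) := fun hv => hind a (by simpa using ha) v hv hav
      obtain ⟨y, _, hy⟩ := huniq v hvX
      have h₁ : a = y := hy a ⟨by simpa using ha, hav.symm⟩
      have h₂ : b = y := hy b ⟨by simpa using hb, hvb⟩
      exact hne (h₁.trans h₂.symm)
  omega

theorem stmt8 {V : Type*} [Fintype V] (G : SimpleGraph V) (hconn : G.Connected)
    (X : Finset V) (hX : IsEffDomSet G (X : Set V)) (hcard : 2 ≤ X.card) :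
    ∀ x ∈ X, ∃ x' ∈ X, x' ≠ x ∧ G.dist x x' = 3 := by
  intro x hx
  obtain ⟨x', hx', hne⟩ := Finset.exists_mem_ne (s := X) (by omega) x
  have h3 : 3 ≤ G.dist x x' := effdom_dist_ge_three G hconn X hX hx hx' (Ne.symm hne)
  rcases eq_or_lt_of_le h3 with heq | hlt
  · exact ⟨x', hx', hne, heq.symm⟩
  -- dist ≥ 4
  obtain ⟨p, hp⟩ := (hconn x x').exists_walk_length_eq_dist
  have hind := hX.1
  have huniq := hX.2.2
  match p, hp with
  | SimpleGraph.Walk.nil, hp => simp at hp; simp at hlt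
  | SimpleGraph.Walk.cons h SimpleGraph.Walk.nil, hp => simp at hp; omega
  | SimpleGraph.Walk.cons (v := v1) h1 (SimpleGraph.Walk.cons (v := v2) h2 r), hp =>
    simp only [SimpleGraph.Walk.length_cons] at hp
    have hrle := G.dist_le r
    have hv2X : v2 ∉ (X : Set V) := by
      intro hv2
      by_cases hv2x : v2 = x
      · subst hv2x
        have hpos : 0 < G.dist v2 x' := hconn.pos_dist_of_ne (Ne.symm hne)
        omega
      · have hge := effdom_dist_ge_three G hconn X hX hx (by simpa using hv2)
          (Ne.symm hv2x)
        have hle : G.dist x v2 ≤ 2 := by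
          have := G.dist_le (SimpleGraph.Walk.cons h1
            (SimpleGraph.Walk.cons h2 SimpleGraph.Walk.nil))
          simpa using this
        omega
    obtain ⟨y, ⟨hyX, hyadj⟩, -⟩ := huniq v2 hv2X
    have hynex : y ≠ x := by
      intro h
      subst h
      have := G.dist_le (SimpleGraph.Walk.cons hyadj.symm r)
      simp only [SimpleGraph.Walk.length_cons] at this
      omega
    refine ⟨y, by simpa using hyX, hynex,
      le_antisymm ?_ (effdom_dist_ge_three G hconn X hX hx (by simpa using hyX)
        (Ne.symm hynex))⟩
    have := G.dist_le (SimpleGraph.Walk.cons h1 (SimpleGraph.Walk.cons h2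
      (SimpleGraph.Walk.cons hyadj SimpleGraph.Walk.nil)))
    simpa using this
end

section
/- If X is an efficient dominating set of a finite simple graph G, then X is a maximal independent set (i.e., an independent dominating set), and moreover X is a minimum-cardinality dominating set of G. -/
open SimpleGraph

theorem stmt13 {V : Type*} [Fintype V] (G : SimpleGraph V) (X : Finset V)
    (hX : IsEffDomSet G (X : Set V)) :
    ((∀ x ∈ X, ∀ y ∈ X, ¬ G.Adj x y) ∧
      ∀ Y : Set V, (∀ x ∈ Y, ∀ y ∈ Y, ¬ G.Adj x y) → (X : Set V) ⊆ Y → Y = (X : Set V)) ∧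
    (∀ D : Finset V, (∀ v : V, ∃ d ∈ D, v ∈ insert d (G.neighborSet d)) →
      X.card ≤ D.card) := by
  obtain ⟨hind, hdom, huniq⟩ := hX
  refine ⟨⟨fun x hx y hy => hind x hx y hy, ?_⟩, ?_⟩
  · intro Y hY hXY
    apply Set.Subset.antisymm _ hXY
    intro y hy
    by_contra hyX
    obtain ⟨x, hx, hmem⟩ := hdom y
    rcases Set.mem_insert_iff.mp hmem with h | h
    · exact hyX (h ▸ hx)
    · exact hY y hy x (hXY hx) (G.adj_symm h)
  · intro D hD
    have hf : ∀ x : V, ∃ d, d ∈ D ∧ (x = d ∨ G.Adj d x) := by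
      intro x
      obtain ⟨d, hd, hmem⟩ := hD x
      exact ⟨d, hd, Set.mem_insert_iff.mp hmem⟩
    choose f hfD hfadj using hf
    apply Finset.card_le_card_of_injOn f (fun x _ => hfD x)
    intro x1 hx1 x2 hx2 heq
    have hx1' : (x1 : V) ∈ (X : Set V) := hx1
    have hx2' : (x2 : V) ∈ (X : Set V) := hx2
    by_contra hne
    rcases hfadj x1 with h1 | h1 <;> rcases hfadj x2 with h2 | h2
    · exact hne (h1.trans (heq ▸ h2.symm))
    · exact hind x1 hx1' x2 hx2' (by rw [h1, heq]; exact h2)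
    · exact hind x2 hx2' x1 hx1' (by rw [h2, ← heq]; exact h1)
    · set d := f x1 with hd
      by_cases hdX : d ∈ (X : Set V)
      · exact hind d hdX x1 hx1' h1
      · obtain ⟨z, _, hzuniq⟩ := huniq d hdX
        exact hne ((hzuniq x1 ⟨hx1', h1⟩).trans (hzuniq x2 ⟨hx2', heq ▸ h2⟩).symm)
end
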